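/- For any distribution π on {s1, ..., n - s0} satisfying πQ = 0 with Σ π_k = 1 (where Q is the rate matrix of the voter model birth-and-death chain with stubborn nodes, s0 > 0 and s1 > 0), the expectation satisfies Σ_k k·π_k = n·s1/(s0 + s1). -/

import Mathlib

noncomputable def deathRate (n s1 k : ℕ) : ℝ :=
  ((k : ℝ) - s1) * ((n : ℝ) - k) / ((n : ℝ) - 1)

noncomputable def birthRate (n s0 k : ℕ) : ℝ :=
  (k : ℝ) * ((n : ℝ) - k - s0) / ((n : ℝ) - 1)

noncomputable def Qmat (n s0 s1 : ℕ) (k j : ℕ) : ℝ :=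
  if j + 1 = k then deathRate n s1 k
  else if j = k + 1 then birthRate n s0 k
  else if j = k then -(deathRate n s1 k + birthRate n s0 k)
  else 0

lemma row_sum (n s0 s1 : ℕ) (hn : 2 ≤ n) (h1 : 0 < s1) (hle : s0 + s1 ≤ n)
    (k : ℕ) (hk : k ∈ Finset.Icc s1 (n - s0)) :
    ∑ l ∈ Finset.Icc s1 (n - s0), (l : ℝ) * Qmat n s0 s1 k l
      = ((s1 : ℝ) * n - k * ((s0 : ℝ) + s1)) / ((n : ℝ) - 1) := by
  simp only [Finset.mem_Icc] at hk
  have hk1 : 1 ≤ k := le_trans h1 hk.1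
  have hkn : k ≤ n - s0 := hk.2
  have hs0n : s0 ≤ n := by omega
  have hn1 : ((n : ℝ) - 1) ≠ 0 := by
    have : (2:ℝ) ≤ n := by exact_mod_cast hn
    linarith
  -- extend to larger interval
  have hext : ∑ l ∈ Finset.Icc s1 (n - s0), (l : ℝ) * Qmat n s0 s1 k l
      = ∑ l ∈ Finset.Icc (s1 - 1) (n - s0 + 1), (l : ℝ) * Qmat n s0 s1 k l := by
    apply Finset.sum_subset
    · intro x hx; simp only [Finset.mem_Icc] at *; omega
    · intro l hl hl'
      simp only [Finset.mem_Icc] at hl hl'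
      have hcase : l = s1 - 1 ∨ l = n - s0 + 1 := by omega
      unfold Qmat
      rcases hcase with h | h
      · subst h
        split_ifs with a b c
        · -- k = s1
          have : k = s1 := by omega
          subst this
          unfold deathRate
          simp
        · omega
        · omega
        · simp
      · subst h
        split_ifs with a b c
        · omega
        · -- k = n - s0
          have hkeq : k = n - s0 := by omega
          subst hkeq
          unfold birthRate
          have : ((n : ℝ) - ((n - s0 : ℕ) : ℝ) - (s0:ℝ)) = 0 := by
            push_cast [Nat.cast_sub hs0n]; ring
          rw [this]; simp
        · omega
        · simp
  rw [hext]
  have htriple : ∑ l ∈ Finset.Icc (s1 - 1) (n - s0 + 1), (l : ℝ) * Qmat n s0 s1 k l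
      = ∑ l ∈ ({k - 1, k, k + 1} : Finset ℕ), (l : ℝ) * Qmat n s0 s1 k l := by
    symm
    apply Finset.sum_subset
    · intro x hx
      simp only [Finset.mem_insert, Finset.mem_singleton] at hx
      simp only [Finset.mem_Icc]; omega
    · intro l hl hl'
      simp only [Finset.mem_insert, Finset.mem_singleton, not_or] at hl'
      unfold Qmat
      split_ifs with a b c
      · omega
      · omega
      · omega
      · simp
  rw [htriple]
  have h1' : (k - 1 : ℕ) ∉ ({k, k + 1} : Finset ℕ) := by simp; omega
  have h2' : k ∉ ({k + 1} : Finset ℕ) := by simp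
  rw [Finset.sum_insert h1', Finset.sum_insert h2', Finset.sum_singleton]
  have q1 : Qmat n s0 s1 k (k - 1) = deathRate n s1 k := by
    unfold Qmat; rw [if_pos (by omega)]
  have q2 : Qmat n s0 s1 k k = -(deathRate n s1 k + birthRate n s0 k) := by
    unfold Qmat; rw [if_neg (by omega), if_neg (by omega), if_pos rfl]
  have q3 : Qmat n s0 s1 k (k + 1) = birthRate n s0 k := by
    unfold Qmat; rw [if_neg (by omega), if_pos rfl]
  rw [q1, q2, q3]
  have hc : ((k - 1 : ℕ) : ℝ) = (k : ℝ) - 1 := by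
    push_cast [Nat.cast_sub hk1]; ring
  rw [hc]
  unfold deathRate birthRate
  field_simp
  push_cast
  ring

/-- Any stationary distribution `π` of the voter model birth-and-death chain
with stubborn nodes (`s0, s1 > 0`) has mean `n·s1/(s0 + s1)`. -/
theorem stationary_mean (n s0 s1 : ℕ) (hn : 2 ≤ n)
    (h0 : 0 < s0) (h1 : 0 < s1) (hle : s0 + s1 ≤ n)
    (π : ℕ → ℝ) (hnonneg : ∀ k ∈ Finset.Icc s1 (n - s0), 0 ≤ π k)
    (hnorm : ∑ k ∈ Finset.Icc s1 (n - s0), π k = 1)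
    (hstat : ∀ l ∈ Finset.Icc s1 (n - s0),
      ∑ k ∈ Finset.Icc s1 (n - s0), π k * Qmat n s0 s1 k l = 0) :
    ∑ k ∈ Finset.Icc s1 (n - s0), (k : ℝ) * π k = n * s1 / (s0 + s1) := by
  set S := Finset.Icc s1 (n - s0) with hS
  have hn1 : ((n : ℝ) - 1) ≠ 0 := by
    have : (2:ℝ) ≤ n := by exact_mod_cast hn
    linarith
  have hswap : ∑ k ∈ S, π k * (∑ l ∈ S, (l : ℝ) * Qmat n s0 s1 k l) = 0 := by
    calc ∑ k ∈ S, π k * (∑ l ∈ S, (l : ℝ) * Qmat n s0 s1 k l)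
        = ∑ k ∈ S, ∑ l ∈ S, π k * ((l : ℝ) * Qmat n s0 s1 k l) := by
          simp [Finset.mul_sum]
      _ = ∑ l ∈ S, ∑ k ∈ S, π k * ((l : ℝ) * Qmat n s0 s1 k l) := Finset.sum_comm
      _ = ∑ l ∈ S, (l : ℝ) * ∑ k ∈ S, π k * Qmat n s0 s1 k l := by
          apply Finset.sum_congr rfl
          intro l _
          rw [Finset.mul_sum]
          apply Finset.sum_congr rfl
          intro k _; ring
      _ = 0 := by
          apply Finset.sum_eq_zero
          intro l hl
          rw [hstat l hl, mul_zero]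
  have hkey : ∑ k ∈ S, π k * (((s1 : ℝ) * n - k * ((s0 : ℝ) + s1)) / ((n : ℝ) - 1)) = 0 := by
    rw [← hswap]
    apply Finset.sum_congr rfl
    intro k hk
    rw [row_sum n s0 s1 hn h1 hle k hk]
  have hkey2 : ∑ k ∈ S, π k * ((s1 : ℝ) * n - k * ((s0 : ℝ) + s1)) = 0 := by
    have := hkey
    rw [show (∑ k ∈ S, π k * (((s1 : ℝ) * n - k * ((s0 : ℝ) + s1)) / ((n : ℝ) - 1)))
        = (∑ k ∈ S, π k * ((s1 : ℝ) * n - k * ((s0 : ℝ) + s1))) / ((n:ℝ)-1) by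
      rw [Finset.sum_div]; apply Finset.sum_congr rfl; intro k _; ring] at this
    field_simp at this
    rw [mul_zero] at this
    exact this
  have hexpand : ∑ k ∈ S, π k * ((s1 : ℝ) * n - k * ((s0 : ℝ) + s1))
      = (s1 : ℝ) * n * (∑ k ∈ S, π k) - ((s0 : ℝ) + s1) * ∑ k ∈ S, (k : ℝ) * π k := by
    rw [Finset.mul_sum, Finset.mul_sum, ← Finset.sum_sub_distrib]
    apply Finset.sum_congr rfl
    intro k _; ring
  rw [hexpand, hnorm, mul_one] at hkey2
  have hs : ((s0 : ℝ) + s1) ≠ 0 := by positivity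
  field_simp
  linarith
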